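/- Let f : {0,1}³ → {0,1} be an elementary cellular automaton local rule with f(0,0,0) = 0, let λ ∈ (0,1), and set S₁ = f(1,0,0)+f(0,1,0)+f(0,0,1). If λ·S₁ > 1, then there exists a ∈ (0,1) solving the mean-field fixed-point equation a = λ·Σ_{(z₁,z₂,z₃)∈{0,1}³ : f(z₁,z₂,z₃)=1} Π_{k=1}^{3} (z_k·a + (1−z_k)·(1−a)). -/
import Mathlib


/-- Real value of a binary cell. -/
def bitR (b : Bool) : ℝ := (b.toNat : ℝ)

/-- The mean-field sum `Σ_{f(z)=1} Π_{k=1}^{3} (z_k·a + (1-z_k)·(1-a))`. -/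
noncomputable def mfSum (f : Bool → Bool → Bool → Bool) (a : ℝ) : ℝ :=
  ∑ z : Bool × Bool × Bool,
    if f z.1 z.2.1 z.2.2 = true then
      (bitR z.1 * a + (1 - bitR z.1) * (1 - a)) *
        ((bitR z.2.1 * a + (1 - bitR z.2.1) * (1 - a)) *
          (bitR z.2.2 * a + (1 - bitR z.2.2) * (1 - a)))
    else 0

/-- `S₁ = f(1,0,0)+f(0,1,0)+f(0,0,1)`. -/
def sum1 (f : Bool → Bool → Bool → Bool) : ℕ :=
  (f true false false).toNat + (f false true false).toNat + (f false false true).toNat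

lemma ite_toNat (b : Bool) (x : ℝ) : (if b = true then x else 0) = (b.toNat : ℝ) * x := by
  cases b <;> simp

lemma mfSum_eq (f : Bool → Bool → Bool → Bool) (a : ℝ) : mfSum f a =
    ((f true true true).toNat : ℝ) * (a*a*a)
  + ((f true true false).toNat : ℝ) * (a*a*(1-a))
  + ((f true false true).toNat : ℝ) * (a*(1-a)*a)
  + ((f true false false).toNat : ℝ) * (a*(1-a)*(1-a))
  + ((f false true true).toNat : ℝ) * ((1-a)*a*a)
  + ((f false true false).toNat : ℝ) * ((1-a)*a*(1-a))
  + ((f false false true).toNat : ℝ) * ((1-a)*(1-a)*a)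
  + ((f false false false).toNat : ℝ) * ((1-a)*(1-a)*(1-a)) := by
  simp [mfSum, Fintype.sum_prod_type, Fintype.sum_bool, bitR, ite_toNat]
  ring

lemma toNat_mem (b : Bool) : (0:ℝ) ≤ (b.toNat : ℝ) ∧ ((b.toNat : ℝ)) ≤ 1 := by
  cases b <;> norm_num

lemma sum1_cast (f : Bool → Bool → Bool → Bool) : (sum1 f : ℝ) = ((f true false false).toNat : ℝ)
    + ((f false true false).toNat : ℝ) + ((f false false true).toNat : ℝ) := by
  simp [sum1]

lemma mfSum_lower (f : Bool → Bool → Bool → Bool) (t : ℝ) (ht0 : 0 ≤ t) (ht1 : t ≤ 1) :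
    (sum1 f : ℝ) * (t * (1-t) * (1-t)) ≤ mfSum f t := by
  rw [mfSum_eq, sum1_cast]
  obtain ⟨h1, _⟩ := toNat_mem (f true true true)
  obtain ⟨h2, _⟩ := toNat_mem (f true true false)
  obtain ⟨h3, _⟩ := toNat_mem (f true false true)
  obtain ⟨h5, _⟩ := toNat_mem (f false true true)
  obtain ⟨h8, _⟩ := toNat_mem (f false false false)
  have hs : (0:ℝ) ≤ 1 - t := by linarith
  nlinarith [mul_nonneg h1 (mul_nonneg (mul_nonneg ht0 ht0) ht0),
    mul_nonneg h2 (mul_nonneg (mul_nonneg ht0 ht0) hs),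
    mul_nonneg h3 (mul_nonneg (mul_nonneg ht0 hs) ht0),
    mul_nonneg h5 (mul_nonneg (mul_nonneg hs ht0) ht0),
    mul_nonneg h8 (mul_nonneg (mul_nonneg hs hs) hs)]

lemma mfSum_one_le (f : Bool → Bool → Bool → Bool) : mfSum f 1 ≤ 1 := by
  rw [mfSum_eq]
  nlinarith [(toNat_mem (f true true true)).2]

lemma mfSum_continuous (f : Bool → Bool → Bool → Bool) : Continuous (mfSum f) := by
  have : mfSum f = fun a => ((f true true true).toNat : ℝ) * (a*a*a)
    + ((f true true false).toNat : ℝ) * (a*a*(1-a))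
    + ((f true false true).toNat : ℝ) * (a*(1-a)*a)
    + ((f true false false).toNat : ℝ) * (a*(1-a)*(1-a))
    + ((f false true true).toNat : ℝ) * ((1-a)*a*a)
    + ((f false true false).toNat : ℝ) * ((1-a)*a*(1-a))
    + ((f false false true).toNat : ℝ) * ((1-a)*(1-a)*a)
    + ((f false false false).toNat : ℝ) * ((1-a)*(1-a)*(1-a)) := by
    funext a; exact mfSum_eq f a
  rw [this]; fun_prop

lemma exists_t (s : ℝ) (hs1 : 1 < s) : ∃ t : ℝ, 0 < t ∧ t < 1 ∧ 1 < s * ((1-t)*(1-t)) := by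
  have hs0 : 0 < s := lt_trans one_pos hs1
  have hinv : 1/s < 1 := by rw [div_lt_one hs0]; exact hs1
  have hinv0 : 0 < 1/s := by positivity
  set m : ℝ := (1/s + 1)/2 with hm
  have hm0 : 0 < m := by positivity
  have hm1 : m < 1 := by rw [hm]; linarith
  have hms : 1/s < m := by rw [hm]; linarith
  obtain ⟨u, hu0, hum⟩ : ∃ u : ℝ, 0 < u ∧ u * u = m :=
    ⟨Real.sqrt m, Real.sqrt_pos.mpr hm0, Real.mul_self_sqrt (le_of_lt hm0)⟩
  have hu1 : u < 1 := by nlinarith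
  refine ⟨1 - u, by linarith, by linarith, ?_⟩
  have hsm : 1 < s * m := by
    rw [div_lt_iff₀ hs0] at hms
    linarith [mul_comm m s]
  have : (1 - (1-u)) * (1 - (1-u)) = m := by rw [show 1 - (1-u) = u by ring]; exact hum
  rw [this]; exact hsm

theorem stmt12 (f : Bool → Bool → Bool → Bool) (hf : f false false false = false)
    (l : ℝ) (hl : l ∈ Set.Ioo (0:ℝ) 1) (h : l * (sum1 f : ℝ) > 1) :
    ∃ a ∈ Set.Ioo (0:ℝ) 1, a = l * mfSum f a := by
  obtain ⟨hl0, hl1⟩ := hl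
  obtain ⟨t, ht0, ht1, htm⟩ := exists_t (l * (sum1 f : ℝ)) h
  have hcont : Continuous (fun a => l * mfSum f a - a) := (continuous_const.mul (mfSum_continuous f)).sub continuous_id
  -- value at t is positive
  have hFt : 0 < l * mfSum f t - t := by
    have hlow := mfSum_lower f t (le_of_lt ht0) (le_of_lt ht1)
    have h2 : l * ((sum1 f : ℝ) * (t * (1-t) * (1-t))) ≤ l * mfSum f t :=
      mul_le_mul_of_nonneg_left hlow (le_of_lt hl0)
    have h3 : t < l * ((sum1 f : ℝ) * (t * (1-t) * (1-t))) := by nlinarith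
    linarith
  -- value at 1 is negative
  have hF1 : l * mfSum f 1 - 1 < 0 := by
    have := mfSum_one_le f
    nlinarith
  have hsub : Set.Ioo ((fun a => l * mfSum f a - a) 1) ((fun a => l * mfSum f a - a) t)
      ⊆ (fun a => l * mfSum f a - a) '' Set.Ioo t 1 :=
    intermediate_value_Ioo' (le_of_lt ht1) hcont.continuousOn
  obtain ⟨a, ha, hFa⟩ := hsub ⟨hF1, hFt⟩
  refine ⟨a, ⟨lt_trans ht0 ha.1, ha.2⟩, ?_⟩
  have : l * mfSum f a - a = 0 := hFa
  linarith
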